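/- Let T be a finite tree and o, p vertices, v a neighbour of p with d_T(o, {p,v}) = d_T(o,p). In the general monomer-dimer model, the covariance ∂R(T,o)/∂w_{pv} = ∂ℰ(T,pv)/∂x_o (times positive weights) is ≤ 0 if d_T(o, pv) is even (including o ∈ {p,v}) and ≥ 0 if d_T(o, pv) is odd. Equivalently, 1_{o∉{p,v}} Z_{T−o−p−v} Z_T − Z_{T−o} Z_{T−p−v} has sign (−1)^{d_T(o,pv)+1}. -/

import Mathlib

set_option maxHeartbeats 1000000


open Finset
open scoped Classical

/-- The set of matchings (dimeric configurations) of `G` using only vertices of `S`. -/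
noncomputable def matchingsOn {V : Type*} (G : SimpleGraph V) (S : Finset V) :
    Finset (Finset (Sym2 V)) :=
  S.sym2.powerset.filter fun D =>
    (∀ e ∈ D, e ∈ G.edgeSet) ∧
      (D : Set (Sym2 V)).Pairwise fun e f => ∀ v, v ∈ e → v ∉ f

/-- General monomer-dimer partition function with vertex weights `x` and edge
weights `w`:  `Z_G = Σ_D (Π_{e∈D} w_e)(Π_{v uncovered} x_v)`. -/
noncomputable def Zgen {V : Type*} (G : SimpleGraph V) (S : Finset V)
    (x : V → ℝ) (w : Sym2 V → ℝ) : ℝ :=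
  ∑ D ∈ matchingsOn G S,
    (∏ e ∈ D, w e) * ∏ v ∈ S.filter (fun v => ∀ e ∈ D, v ∉ e), x v

section Aux
variable {V : Type*}

lemma mem_matchingsOn {G : SimpleGraph V} {S : Finset V} {D : Finset (Sym2 V)} :
    D ∈ matchingsOn G S ↔ D ⊆ S.sym2 ∧ (∀ e ∈ D, e ∈ G.edgeSet) ∧
      (D : Set (Sym2 V)).Pairwise fun e f => ∀ v, v ∈ e → v ∉ f := by
  simp [matchingsOn, Finset.mem_filter, Finset.mem_powerset, and_assoc]

lemma Zgen_nonneg {G : SimpleGraph V} {S : Finset V} {x : V → ℝ} {w : Sym2 V → ℝ}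
    (hx : ∀ v, 0 ≤ x v) (hw : ∀ e, 0 ≤ w e) : 0 ≤ Zgen G S x w :=
  Finset.sum_nonneg fun D _ => mul_nonneg (Finset.prod_nonneg fun e _ => hw e)
    (Finset.prod_nonneg fun v _ => hx v)

lemma Zgen_rec (G : SimpleGraph V) (S : Finset V) (x : V → ℝ) (w : Sym2 V → ℝ)
    (a : V) (ha : a ∈ S) :
    Zgen G S x w = x a * Zgen G (S.erase a) x w +
      ∑ u ∈ (S.erase a).filter (fun u => G.Adj a u),
        w s(a, u) * Zgen G ((S.erase a).erase u) x w := by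
  set t : Finset V → Finset (Sym2 V) → ℝ := fun S' D =>
    (∏ e ∈ D, w e) * ∏ v ∈ S'.filter (fun v => ∀ e ∈ D, v ∉ e), x v with ht
  have hZ : ∀ S', Zgen G S' x w = ∑ D ∈ matchingsOn G S', t S' D := fun _ => rfl
  have hsplit := Finset.sum_filter_add_sum_filter_not (matchingsOn G S)
    (fun D => ∀ e ∈ D, a ∉ e) (t S)
  -- Part A : matchings not covering a
  have hA1 : (matchingsOn G S).filter (fun D => ∀ e ∈ D, a ∉ e)
      = matchingsOn G (S.erase a) := by
    ext D
    simp only [Finset.mem_filter, mem_matchingsOn]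
    constructor
    · rintro ⟨⟨hsub, hedge, hpair⟩, hfree⟩
      refine ⟨fun e he => ?_, hedge, hpair⟩
      rw [Finset.mem_sym2_iff]
      intro y hy
      rw [Finset.mem_erase]
      exact ⟨fun h => hfree e he (h ▸ hy), Finset.mem_sym2_iff.mp (hsub he) y hy⟩
    · rintro ⟨hsub, hedge, hpair⟩
      refine ⟨⟨hsub.trans (Finset.sym2_mono (Finset.erase_subset _ _)), hedge, hpair⟩,
        fun e he hae => ?_⟩
      have := Finset.mem_sym2_iff.mp (hsub he) a hae
      exact absurd this (by simp)
  have hA2 : ∀ D ∈ matchingsOn G (S.erase a), t S D = x a * t (S.erase a) D := by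
    intro D hD
    obtain ⟨hsub, -, -⟩ := mem_matchingsOn.mp hD
    have hfilter : S.filter (fun v => ∀ e ∈ D, v ∉ e)
        = insert a ((S.erase a).filter (fun v => ∀ e ∈ D, v ∉ e)) := by
      ext z
      simp only [Finset.mem_filter, Finset.mem_insert, Finset.mem_erase]
      constructor
      · rintro ⟨hz, hunc⟩
        by_cases hza : z = a
        · exact Or.inl hza
        · exact Or.inr ⟨⟨hza, hz⟩, hunc⟩
      · rintro (rfl | ⟨⟨hza, hz⟩, hunc⟩)
        · refine ⟨ha, fun e he hze => ?_⟩
          have := Finset.mem_sym2_iff.mp (hsub he) z hze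
          exact absurd this (by simp)
        · exact ⟨hz, hunc⟩
    have hnotmem : a ∉ (S.erase a).filter (fun v => ∀ e ∈ D, v ∉ e) := by simp
    rw [ht]
    simp only
    rw [hfilter, Finset.prod_insert hnotmem]
    ring
  have hA : ∑ D ∈ (matchingsOn G S).filter (fun D => ∀ e ∈ D, a ∉ e), t S D
      = x a * Zgen G (S.erase a) x w := by
    rw [hA1, Finset.sum_congr rfl hA2, ← Finset.mul_sum, hZ]
  -- Part B : matchings covering a
  set N := (S.erase a).filter (fun u => G.Adj a u) with hN
  have hNiff : ∀ u : V, u ∈ N ↔ (u ∈ S ∧ u ≠ a ∧ G.Adj a u) := by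
    intro u
    rw [hN, Finset.mem_filter, Finset.mem_erase]
    tauto
  have hends : ∀ u : V, ∀ D0 ∈ matchingsOn G ((S.erase a).erase u),
      ∀ e ∈ D0, a ∉ e ∧ u ∉ e := by
    intro u D0 hD0 e he
    obtain ⟨hsub0, -, -⟩ := mem_matchingsOn.mp hD0
    have h := Finset.mem_sym2_iff.mp (hsub0 he)
    constructor
    · intro hae; have := h a hae; simp [Finset.mem_erase] at this
    · intro hue; have := h u hue; simp [Finset.mem_erase] at this
  have hnotin : ∀ u : V, ∀ D0 ∈ matchingsOn G ((S.erase a).erase u), s(a, u) ∉ D0 := by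
    intro u D0 hD0 hc
    exact (hends u D0 hD0 _ hc).1 (Sym2.mem_mk_left _ _)
  have hB1 : (matchingsOn G S).filter (fun D => ¬ ∀ e ∈ D, a ∉ e)
      = N.biUnion (fun u => (matchingsOn G ((S.erase a).erase u)).image (insert s(a, u))) := by
    ext D
    simp only [Finset.mem_filter, Finset.mem_biUnion, Finset.mem_image]
    constructor
    · rintro ⟨hD, hcov⟩
      push_neg at hcov
      obtain ⟨e0, he0, hae0⟩ := hcov
      obtain ⟨hsub, hedge, hpair⟩ := mem_matchingsOn.mp hD
      obtain ⟨u, rfl⟩ := Sym2.mem_iff_exists.mp hae0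
      have hadj : G.Adj a u := (G.mem_edgeSet).mp (hedge _ he0)
      have huS : u ∈ S := Finset.mem_sym2_iff.mp (hsub he0) u (Sym2.mem_mk_right a u)
      refine ⟨u, (hNiff u).mpr ⟨huS, hadj.ne', hadj⟩, D.erase s(a, u), ?_,
        Finset.insert_erase he0⟩
      rw [mem_matchingsOn]
      refine ⟨?_, fun e he => hedge e (Finset.mem_of_mem_erase he),
        hpair.mono (Finset.coe_subset.mpr (Finset.erase_subset _ _))⟩
      intro e he
      have hne := Finset.ne_of_mem_erase he
      have heD := Finset.mem_of_mem_erase he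
      rw [Finset.mem_sym2_iff]
      intro y hy
      have hyS : y ∈ S := Finset.mem_sym2_iff.mp (hsub heD) y hy
      have hkey : ∀ z, z ∈ ((↑D : Set (Sym2 V))) → ∀ v ∈ z, z ≠ s(a,u) → v ∉ s(a,u) := by
        intro z hz v hv hzne
        exact hpair hz (Finset.mem_coe.mpr he0) hzne v hv
      rw [Finset.mem_erase, Finset.mem_erase]
      refine ⟨?_, ?_, hyS⟩
      · rintro rfl
        exact hkey e (Finset.mem_coe.mpr heD) y hy hne (Sym2.mem_mk_right a y)
      · rintro rfl
        exact hkey e (Finset.mem_coe.mpr heD) y hy hne (Sym2.mem_mk_left y u)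
    · rintro ⟨u, huN, D0, hD0, rfl⟩
      obtain ⟨huS, hua, hadj⟩ := (hNiff u).mp huN
      obtain ⟨hsub0, hedge0, hpair0⟩ := mem_matchingsOn.mp hD0
      have hEsub : ((S.erase a).erase u) ⊆ S :=
        (Finset.erase_subset _ _).trans (Finset.erase_subset _ _)
      refine ⟨?_, ?_⟩
      · rw [mem_matchingsOn]
        refine ⟨?_, ?_, ?_⟩
        · intro e he
          rcases Finset.mem_insert.mp he with rfl | he'
          · rw [Finset.mem_sym2_iff]
            intro y hy
            rcases Sym2.mem_iff.mp hy with rfl | rfl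
            · exact ha
            · exact huS
          · exact Finset.sym2_mono hEsub (hsub0 he')
        · intro e he
          rcases Finset.mem_insert.mp he with rfl | he'
          · exact G.mem_edgeSet.mpr hadj
          · exact hedge0 e he'
        · rw [Finset.coe_insert, Set.pairwise_insert]
          refine ⟨hpair0, fun e heD0 _ => ⟨?_, ?_⟩⟩
          · intro y hy
            have h2 := hends u D0 hD0 e (Finset.mem_coe.mp heD0)
            rcases Sym2.mem_iff.mp hy with h | h
            · rw [h]; exact h2.1
            · rw [h]; exact h2.2
          · intro y hy hymem
            have h2 := hends u D0 hD0 e (Finset.mem_coe.mp heD0)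
            rcases Sym2.mem_iff.mp hymem with h | h
            · rw [h] at hy; exact h2.1 hy
            · rw [h] at hy; exact h2.2 hy
      · intro h
        exact h s(a, u) (Finset.mem_insert_self _ _) (Sym2.mem_mk_left a u)
  have hdisj : (↑N : Set V).PairwiseDisjoint
      (fun u => (matchingsOn G ((S.erase a).erase u)).image (insert s(a, u))) := by
    intro u hu u' hu' hne
    rw [Function.onFun, Finset.disjoint_left]
    rintro D hD hD'
    simp only [Finset.mem_image] at hD hD'
    obtain ⟨D0, hD0, rfl⟩ := hD
    obtain ⟨D0', hD0', hE⟩ := hD'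
    have hmem : s(a, u') ∈ insert s(a, u) D0 := hE ▸ Finset.mem_insert_self _ _
    rcases Finset.mem_insert.mp hmem with h | h
    · exact hne (Sym2.congr_right.mp h).symm
    · exact (hends u D0 hD0 _ h).1 (Sym2.mem_mk_left _ _)
  have hterm : ∀ u ∈ N, ∀ D0 ∈ matchingsOn G ((S.erase a).erase u),
      t S (insert s(a, u) D0) = w s(a, u) * t ((S.erase a).erase u) D0 := by
    intro u huN D0 hD0
    obtain ⟨huS, hua, hadj⟩ := (hNiff u).mp huN
    have hnot := hnotin u D0 hD0
    have hfilter : S.filter (fun v => ∀ e ∈ insert s(a, u) D0, v ∉ e)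
        = ((S.erase a).erase u).filter (fun v => ∀ e ∈ D0, v ∉ e) := by
      ext z
      simp only [Finset.mem_filter, Finset.mem_erase, Finset.forall_mem_insert]
      constructor
      · rintro ⟨hz, hznot, hrest⟩
        rw [Sym2.mem_iff] at hznot
        push_neg at hznot
        exact ⟨⟨hznot.2, hznot.1, hz⟩, hrest⟩
      · rintro ⟨⟨hzu, hza, hz⟩, hrest⟩
        refine ⟨hz, ?_, hrest⟩
        rw [Sym2.mem_iff]
        push_neg
        exact ⟨hza, hzu⟩
    rw [ht]
    simp only
    rw [Finset.prod_insert hnot, hfilter]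
    ring
  have hB : ∑ D ∈ (matchingsOn G S).filter (fun D => ¬ ∀ e ∈ D, a ∉ e), t S D
      = ∑ u ∈ N, w s(a, u) * Zgen G ((S.erase a).erase u) x w := by
    rw [hB1, Finset.sum_biUnion hdisj]
    refine Finset.sum_congr rfl fun u huN => ?_
    rw [Finset.sum_image (fun D0 hD0 D0' hD0' h => by
      rw [← Finset.erase_insert (hnotin u D0 hD0), h,
        Finset.erase_insert (hnotin u D0' hD0')])]
    rw [Finset.sum_congr rfl (fun D0 hD0 => hterm u huN D0 hD0), ← Finset.mul_sum, hZ]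
  rw [hZ S, ← hsplit, hA, hB]

noncomputable def Qf (G : SimpleGraph V) (x : V → ℝ) (w : Sym2 V → ℝ) (p v : V)
    (S : Finset V) (a : V) : ℝ :=
  (if a ≠ p ∧ a ≠ v then (1 : ℝ) else 0) *
      (Zgen G (((S.erase a).erase p).erase v) x w * Zgen G S x w) -
    Zgen G (S.erase a) x w * Zgen G ((S.erase p).erase v) x w

lemma Q_rec (G : SimpleGraph V) (x : V → ℝ) (w : Sym2 V → ℝ) (p v a : V) (S : Finset V)
    (ha : a ∈ S) (hap : a ≠ p) (hav : a ≠ v) :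
    Qf G x w p v S a = - ∑ u ∈ (S.erase a).filter (fun u => G.Adj a u),
      w s(a, u) * Qf G x w p v (S.erase a) u := by
  have h1 := Zgen_rec G S x w a ha
  have ha2 : a ∈ (S.erase p).erase v := by
    rw [Finset.mem_erase, Finset.mem_erase]
    exact ⟨hav, hap, ha⟩
  have h2 := Zgen_rec G ((S.erase p).erase v) x w a ha2
  have hset1 : ((S.erase p).erase v).erase a = ((S.erase a).erase p).erase v := by
    ext z; simp only [Finset.mem_erase]; tauto
  have hset2 : ∀ u : V, (((S.erase a).erase p).erase v).erase u
      = (((S.erase a).erase u).erase p).erase v := by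
    intro u; ext z; simp only [Finset.mem_erase]; tauto
  set N := (S.erase a).filter (fun u => G.Adj a u) with hN
  have hM : (((S.erase p).erase v).erase a).filter (fun u => G.Adj a u)
      = N.filter (fun u => ¬(u = p ∨ u = v)) := by
    ext z
    simp only [hN, Finset.mem_filter, Finset.mem_erase]
    tauto
  have h2' : Zgen G ((S.erase p).erase v) x w
      = x a * Zgen G (((S.erase a).erase p).erase v) x w +
        ∑ u ∈ N, (if ¬(u = p ∨ u = v) then
          w s(a, u) * Zgen G ((((S.erase a).erase u).erase p).erase v) x w else 0) := by
    rw [h2, hM, Finset.sum_filter, hset1]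
    congr 1
    refine Finset.sum_congr rfl fun u _ => ?_
    split_ifs with h
    · rfl
    · rw [hset2]
  have hL : Qf G x w p v S a
      = Zgen G (((S.erase a).erase p).erase v) x w *
          (∑ u ∈ N, w s(a, u) * Zgen G ((S.erase a).erase u) x w) -
        Zgen G (S.erase a) x w *
          (∑ u ∈ N, (if ¬(u = p ∨ u = v) then
            w s(a, u) * Zgen G ((((S.erase a).erase u).erase p).erase v) x w else 0)) := by
    rw [Qf, if_pos ⟨hap, hav⟩, h1, h2']
    ring
  rw [hL, Finset.mul_sum, Finset.mul_sum, ← Finset.sum_sub_distrib, ← Finset.sum_neg_distrib]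
  refine Finset.sum_congr rfl fun u _ => ?_
  rw [Qf]
  by_cases hcond : u ≠ p ∧ u ≠ v
  · rw [if_pos hcond, if_pos (by tauto)]
    ring
  · rw [if_neg hcond, if_neg (by tauto)]
    ring

lemma Q_zero (G : SimpleGraph V) (x : V → ℝ) (w : Sym2 V → ℝ) (p v : V) (hpv : G.Adj p v) :
    ∀ S : Finset V, ∀ a, a ∈ S → p ∈ S → v ∈ S →
    (¬ ∃ W : G.Walk a p, ∀ z ∈ W.support, z ∈ S) → Qf G x w p v S a = 0 := by
  intro S
  induction S using Finset.strongInductionOn with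
  | _ S ih =>
    intro a ha hp hv hnw
    have hap : a ≠ p := by
      rintro rfl
      exact hnw ⟨SimpleGraph.Walk.nil, by
        intro z hz; simp only [SimpleGraph.Walk.support_nil, List.mem_singleton] at hz
        exact hz ▸ ha⟩
    have hav : a ≠ v := by
      rintro rfl
      refine hnw ⟨SimpleGraph.Walk.cons hpv.symm SimpleGraph.Walk.nil, ?_⟩
      intro z hz
      simp only [SimpleGraph.Walk.support_cons, SimpleGraph.Walk.support_nil,
        List.mem_cons, List.mem_singleton] at hz
      rcases hz with rfl | rfl | h
      · exact ha
      · exact hp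
      · exact absurd h (by simp)
    rw [Q_rec G x w p v a S ha hap hav]
    rw [Finset.sum_eq_zero, neg_zero]
    intro u hu
    rw [Finset.mem_filter] at hu
    obtain ⟨huSa, hadj⟩ := hu
    have hpe : p ∈ S.erase a := Finset.mem_erase.mpr ⟨Ne.symm hap, hp⟩
    have hve : v ∈ S.erase a := Finset.mem_erase.mpr ⟨Ne.symm hav, hv⟩
    have hzero : Qf G x w p v (S.erase a) u = 0 := by
      apply ih (S.erase a) (Finset.erase_ssubset ha) u huSa hpe hve
      rintro ⟨W, hWsup⟩
      refine hnw ⟨SimpleGraph.Walk.cons hadj W, ?_⟩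
      intro z hz
      rw [SimpleGraph.Walk.support_cons] at hz
      rcases List.mem_cons.mp hz with rfl | hz'
      · exact ha
      · exact Finset.mem_of_mem_erase (hWsup z hz')
    rw [hzero, mul_zero]

lemma Q_sign (G : SimpleGraph V) (hG : G.IsTree) (x : V → ℝ) (w : Sym2 V → ℝ)
    (hx : ∀ v, 0 < x v) (hw : ∀ e, 0 < w e) (p v : V) (hpv : G.Adj p v) :
    ∀ n : ℕ, ∀ S : Finset V, ∀ a : V, ∀ W : G.Walk a p, W.IsPath → W.length = n →
      (∀ z ∈ W.support, z ∈ S) → v ∉ W.support → v ∈ S →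
      ((Even n → Qf G x w p v S a ≤ 0) ∧ (Odd n → 0 ≤ Qf G x w p v S a)) := by
  intro n
  induction n with
  | zero =>
    intro S a W hWp hlen hsup hvsup hvS
    have hap : a = p := by
      cases W with
      | nil => rfl
      | cons h q => simp at hlen
    constructor
    · intro _
      rw [Qf, if_neg (fun h => h.1 hap)]
      rw [zero_mul, zero_sub, neg_nonpos]
      exact mul_nonneg (Zgen_nonneg (fun z => (hx z).le) (fun e => (hw e).le))
        (Zgen_nonneg (fun z => (hx z).le) (fun e => (hw e).le))
    · intro hodd
      exact absurd hodd (by simp)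
  | succ n ihn =>
    intro S a W hWp hlen hsup hvsup hvS
    obtain ⟨u, hadj, W', rfl⟩ : ∃ (u : V) (h : G.Adj a u) (W' : G.Walk u p),
        W = W'.cons h := by
      cases W with
      | nil => simp at hlen
      | cons h q => exact ⟨_, h, q, rfl⟩
    have hW'path : W'.IsPath ∧ a ∉ W'.support :=
      (SimpleGraph.Walk.cons_isPath_iff hadj W').mp hWp
    have hlen' : W'.length = n := by
      simpa [SimpleGraph.Walk.length_cons] using hlen
    have hsupcons : (W'.cons hadj).support = a :: W'.support :=
      SimpleGraph.Walk.support_cons _ _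
    have huW : u ∈ W'.support := W'.start_mem_support
    have haS : a ∈ S := hsup a (by rw [hsupcons]; exact List.mem_cons_self)
    have hap : a ≠ p := by rintro rfl; exact hW'path.2 W'.end_mem_support
    have hvsup' : v ∉ W'.support := fun h =>
      hvsup (by rw [hsupcons]; exact List.mem_cons_of_mem _ h)
    have hav : a ≠ v := by
      rintro rfl; exact hvsup (by rw [hsupcons]; exact List.mem_cons_self)
    have hpSa : p ∈ S.erase a := Finset.mem_erase.mpr ⟨Ne.symm hap,
      hsup p (by rw [hsupcons]; exact List.mem_cons_of_mem _ W'.end_mem_support)⟩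
    have hvSa : v ∈ S.erase a := Finset.mem_erase.mpr ⟨Ne.symm hav, hvS⟩
    rw [Q_rec G x w p v a S haS hap hav]
    have hsum : ∑ u' ∈ (S.erase a).filter (fun u' => G.Adj a u'),
        w s(a, u') * Qf G x w p v (S.erase a) u'
        = w s(a, u) * Qf G x w p v (S.erase a) u := by
      apply Finset.sum_eq_single u
      · intro b hb hbu
        rw [Finset.mem_filter] at hb
        have hzero : Qf G x w p v (S.erase a) b = 0 := by
          apply Q_zero G x w p v hpv (S.erase a) b hb.1 hpSa hvSa
          rintro ⟨WU, hWU⟩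
          have haWU : a ∉ WU.support := fun hc =>
            (Finset.mem_erase.mp (hWU a hc)).1 rfl
          have hP'path : WU.bypass.IsPath := WU.bypass_isPath
          have haP' : a ∉ WU.bypass.support := fun hc =>
            haWU (WU.support_bypass_subset hc)
          have hconsPath : (WU.bypass.cons hb.2).IsPath :=
            (SimpleGraph.Walk.cons_isPath_iff _ _).mpr ⟨hP'path, haP'⟩
          obtain ⟨Wu, -, hWuU⟩ := hG.existsUnique_path a p
          have h1 : WU.bypass.cons hb.2 = W'.cons hadj :=
            (hWuU _ hconsPath).trans (hWuU _ hWp).symm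
          injection h1 with e1 e2 e3 e4
          exact hbu e2
        rw [hzero, mul_zero]
      · intro habs
        exact absurd (Finset.mem_filter.mpr ⟨Finset.mem_erase.mpr ⟨hadj.ne',
          hsup u (by rw [hsupcons]; exact List.mem_cons_of_mem _ huW)⟩, hadj⟩) habs
    rw [hsum]
    have IH := ihn (S.erase a) u W' hW'path.1 hlen'
      (fun z hz => Finset.mem_erase.mpr ⟨fun h => hW'path.2 (h ▸ hz),
        hsup z (by rw [hsupcons]; exact List.mem_cons_of_mem _ hz)⟩)
      hvsup' hvSa
    constructor
    · intro heven
      have h0 := IH.2 (Nat.not_even_iff_odd.mp (Nat.even_add_one.mp heven))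
      have := mul_nonneg (hw s(a, u)).le h0
      linarith
    · intro hodd
      have h0 := IH.1 (Nat.not_odd_iff_even.mp (Nat.odd_add_one.mp hodd))
      have := mul_nonpos_of_nonneg_of_nonpos (hw s(a, u)).le h0
      linarith

end Aux

/-- on a finite tree `T`, for a vertex `o` and an edge `pv` with
`d_T(o,{p,v}) = d_T(o,p)`, the quantity
`1_{o∉{p,v}} Z_{T−o−p−v} Z_T − Z_{T−o} Z_{T−p−v}` is `≤ 0` if `d_T(o,pv)` is even
and `≥ 0` if it is odd (equivalently, the covariance
`∂R(T,o)/∂w_{pv} = ∂ℰ(T,pv)/∂x_o` has sign `(−1)^{d_T(o,pv)+1}`). -/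
theorem stmt_16 {V : Type*} [Fintype V] [DecidableEq V] (T : SimpleGraph V)
    (hT : T.IsTree) (x : V → ℝ) (w : Sym2 V → ℝ)
    (hx : ∀ v, 0 < x v) (hw : ∀ e, 0 < w e)
    (o p v : V) (hpv : T.Adj p v) (hd : T.dist o p ≤ T.dist o v) :
    (Even (T.dist o p) →
        (if o ≠ p ∧ o ≠ v then (1 : ℝ) else 0) *
              (Zgen T (((Finset.univ.erase o).erase p).erase v) x w *
                Zgen T Finset.univ x w) ≤
          Zgen T (Finset.univ.erase o) x w *
            Zgen T ((Finset.univ.erase p).erase v) x w) ∧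
      (Odd (T.dist o p) →
        Zgen T (Finset.univ.erase o) x w *
            Zgen T ((Finset.univ.erase p).erase v) x w ≤
          (if o ≠ p ∧ o ≠ v then (1 : ℝ) else 0) *
              (Zgen T (((Finset.univ.erase o).erase p).erase v) x w *
                Zgen T Finset.univ x w)) := by
  have hZnn : ∀ S : Finset V, 0 ≤ Zgen T S x w := fun S =>
    Zgen_nonneg (fun z => (hx z).le) (fun e => (hw e).le)
  have hconn := hT.isConnected
  by_cases hop : o = p
  · constructor
    · intro _
      rw [if_neg (fun h => h.1 hop), zero_mul]
      exact mul_nonneg (hZnn _) (hZnn _)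
    · intro hodd
      rw [hop, SimpleGraph.dist_self] at hodd
      exact absurd hodd (by simp)
  · have hov : o ≠ v := by
      rintro rfl
      rw [SimpleGraph.dist_self] at hd
      exact hop ((hconn.preconnected o p).dist_eq_zero_iff.mp (Nat.le_zero.mp hd))
    obtain ⟨W, hWpath, hWlen⟩ := (hconn.preconnected o p).exists_path_of_dist
    have hvW : v ∉ W.support := by
      intro hvmem
      have hvp : v ≠ p := hpv.ne'
      have h1 : T.dist o v ≤ (W.takeUntil v hvmem).length := SimpleGraph.dist_le _
      have h3 : (W.takeUntil v hvmem).length + (W.dropUntil v hvmem).length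
          = W.length := by
        rw [← SimpleGraph.Walk.length_append, W.take_spec hvmem]
      have h4 : (W.dropUntil v hvmem).length ≠ 0 := fun h0 =>
        hvp (SimpleGraph.Walk.eq_of_length_eq_zero h0)
      omega
    have key := Q_sign T hT x w hx hw p v hpv (T.dist o p) Finset.univ o W hWpath
      hWlen (fun z _ => Finset.mem_univ z) hvW (Finset.mem_univ v)
    have e1 : ∀ (i : DecidableEq V) (s : Finset V) (b : V),
        @Finset.erase V i s b = @Finset.erase V (Classical.decEq V) s b := by
      intro i s b; congr!
    have hQ : Qf T x w p v Finset.univ o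
        = (if o ≠ p ∧ o ≠ v then (1 : ℝ) else 0) *
            (Zgen T (((Finset.univ.erase o).erase p).erase v) x w *
              Zgen T Finset.univ x w) -
          Zgen T (Finset.univ.erase o) x w *
            Zgen T ((Finset.univ.erase p).erase v) x w := by
      rw [Qf]
      congr!
    constructor
    · intro heven
      have := key.1 heven
      rw [hQ] at this
      linarith
    · intro hodd
      have := key.2 hodd
      rw [hQ] at this
      linarith
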